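/- For every integer N ≥ 2, the instantaneous current of the model splits exactly into a gradient part and a circulation part: for every configuration η ∈ Σ_N and every directed edge (x,y) ∈ E_N, j_η(x,y) := c_{x,y}(η) − c_{y,x}(η) = [(τ_y h)(η) − (τ_x h)(η)] + [τ_{f⁺(x,y)} g(η) − τ_{f⁻(x,y)} g(η)], where h : Σ_N → ℝ is the local function h(η) = −η(0). -/
import Mathlib


open Finset

/-- The two-dimensional discrete torus `Λ_N = ℤ²/Nℤ²`. -/
abbrev Torus (N : ℕ) := ZMod N × ZMod N

/-- Particle configurations `Σ_N = {0,1}^{Λ_N}`. -/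
abbrev Config (N : ℕ) := Torus N → Bool

/-- Occupation number as a real number. -/
noncomputable def bval (b : Bool) : ℝ := if b then 1 else 0

/-- The four unit directions `e¹, e², -e¹, -e²`. -/
def dvec (N : ℕ) : Fin 4 → Torus N := ![(1, 0), (0, 1), (-1, 0), (0, -1)]

/-- Reversal of a direction. -/
def rev : Fin 4 → Fin 4 := ![2, 3, 0, 1]

/-- The two coordinate unit vectors `e¹, e²`. -/
def ee (N : ℕ) : Fin 2 → Torus N := ![(1, 0), (0, 1)]

/-- `η^{x,y}` : exchange the occupation values at `x` and `y`. -/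
def swap {N : ℕ} (η : Config N) (x y : Torus N) : Config N :=
  fun z => if z = x then η y else if z = y then η x else η z

/-- Translation of configurations, `(τ_z η)(w) = η(w - z)`. -/
def trc {N : ℕ} (z : Torus N) (η : Config N) : Config N := fun w => η (w - z)

/-- Translation of functions, `(τ_z h)(η) = h(τ_{-z} η)`. -/
def trf {N : ℕ} (z : Torus N) (h : Config N → ℝ) : Config N → ℝ := fun η => h (trc (-z) η)

/-- The local function `g` on the face with lower-left corner `0`. -/
noncomputable def gfun {N : ℕ} (α : ℝ) (η : Config N) : ℝ :=
  if η (0, 0) = true ∧ η (1, 1) = true ∧ η (1, 0) = false ∧ η (0, 1) = false then α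
  else if η (1, 0) = true ∧ η (0, 1) = true ∧ η (0, 0) = false ∧ η (1, 1) = false then α
  else 0

/-- Lower-left corner of the anticlockwise face `f⁺(x, x + dvec d)` traversing the edge
according to its orientation. -/
def fplus {N : ℕ} (x : Torus N) (d : Fin 4) : Torus N :=
  ![x, x - (1, 0), x - (1, 0) - (0, 1), x - (0, 1)] d

/-- Lower-left corner of the anticlockwise face `f⁻(x, x + dvec d)` traversing the reversed
edge according to its orientation. -/
def fminus {N : ℕ} (x : Torus N) (d : Fin 4) : Torus N :=
  ![x - (0, 1), x, x - (1, 0), x - (1, 0) - (0, 1)] d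

/-- The jump rate `c_{x, x + dvec d}(η)`. -/
noncomputable def rate {N : ℕ} (α : ℝ) (η : Config N) (x : Torus N) (d : Fin 4) : ℝ :=
  bval (η x) * (1 - bval (η (x + dvec N d)))
    + bval (η x) * (trf (fplus x d) (gfun α) η - trf (fminus x d) (gfun α) η)

/-- The Bernoulli product measure `ν_ρ`. -/
noncomputable def nu {N : ℕ} [NeZero N] (ρ : ℝ) (η : Config N) : ℝ :=
  ∏ x : Torus N, if η x then ρ else 1 - ρ

/-- The generator `L_N`. -/
noncomputable def gen {N : ℕ} [NeZero N] (α : ℝ) (F : Config N → ℝ) (η : Config N) : ℝ :=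
  ∑ x : Torus N, ∑ d : Fin 4, rate α η x d * (F (swap η x (x + dvec N d)) - F η)

/-- Sum of an edge function over the four directed edges of the anticlockwise oriented face
with lower-left corner `w`. -/
noncomputable def faceCCW {N : ℕ} (F : Torus N → Fin 4 → ℝ) (w : Torus N) : ℝ :=
  F w 0 + F (w + (1, 0)) 1 + F (w + (1, 0) + (0, 1)) 2 + F (w + (0, 1)) 3

/-- Sum of an edge function over the four directed edges of the clockwise oriented face
with lower-left corner `w`. -/
noncomputable def faceCW {N : ℕ} (F : Torus N → Fin 4 → ℝ) (w : Torus N) : ℝ :=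
  F w 1 + F (w + (0, 1)) 0 + F (w + (1, 0) + (0, 1)) 3 + F (w + (1, 0)) 2


lemma trf_h {N : ℕ} (w : Torus N) (η : Config N) :
    trf w (fun ζ => -bval (ζ (0, 0))) η = -bval (η w) := by
  show -bval (η ((0, 0) - -w)) = _
  rw [show ((0, 0) : Torus N) - -w = w from by apply Prod.ext <;> simp <;> ring]

lemma trfg {N : ℕ} (α : ℝ) (w : Torus N) (η : Config N) :
    trf w (gfun α) η =
      (if η w = true ∧ η (w + (1, 1)) = true ∧ η (w + (1, 0)) = false ∧ η (w + (0, 1)) = false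
        then α
        else if η (w + (1, 0)) = true ∧ η (w + (0, 1)) = true ∧ η w = false ∧
            η (w + (1, 1)) = false then α
        else 0) := by
  show (if η ((0, 0) - -w) = true ∧ η ((1, 1) - -w) = true ∧ η ((1, 0) - -w) = false ∧
      η ((0, 1) - -w) = false then α
    else if η ((1, 0) - -w) = true ∧ η ((0, 1) - -w) = true ∧ η ((0, 0) - -w) = false ∧
        η ((1, 1) - -w) = false then α
    else 0) = _
  rw [show ((0, 0) : Torus N) - -w = w from by apply Prod.ext <;> simp <;> ring,
    show ((1, 1) : Torus N) - -w = w + (1, 1) from by apply Prod.ext <;> simp <;> ring,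
    show ((1, 0) : Torus N) - -w = w + (1, 0) from by apply Prod.ext <;> simp <;> ring,
    show ((0, 1) : Torus N) - -w = w + (0, 1) from by apply Prod.ext <;> simp <;> ring]

lemma gzero {N : ℕ} (α : ℝ) (η : Config N) (w a b : Torus N)
    (ha : a = w ∨ a = w + (1, 1)) (hb : b = w + (1, 0) ∨ b = w + (0, 1))
    (h : η a = η b) : trf w (gfun α) η = 0 := by
  rcases ha with rfl | rfl <;> rcases hb with rfl | rfl <;> rw [trfg] <;>
    split_ifs with h1 h2 <;> simp_all

lemma key (b1 b2 : Bool) (G1 G2 : ℝ) (h : b1 = b2 → G1 = 0 ∧ G2 = 0) :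
    (bval b1 * (1 - bval b2) + bval b1 * (G1 - G2))
      - (bval b2 * (1 - bval b1) + bval b2 * (G2 - G1))
      = ((-bval b2) - (-bval b1)) + (G1 - G2) := by
  cases b1 <;> cases b2 <;> simp_all [bval] <;> ring

lemma main_case {N : ℕ} (α : ℝ) (η : Config N) (x y p q : Torus N)
    (hv : η x = η y → trf p (gfun α) η = 0 ∧ trf q (gfun α) η = 0) :
    (bval (η x) * (1 - bval (η y)) + bval (η x) * (trf p (gfun α) η - trf q (gfun α) η))
      - (bval (η y) * (1 - bval (η x)) + bval (η y) * (trf q (gfun α) η - trf p (gfun α) η))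
      = (trf y (fun ζ => -bval (ζ (0, 0))) η - trf x (fun ζ => -bval (ζ (0, 0))) η)
        + (trf p (gfun α) η - trf q (gfun α) η) := by
  rw [trf_h, trf_h]
  exact key _ _ _ _ hv


/-- exact splitting of the instantaneous current into a gradient part with
`h(η) = -η(0)` and a circulation part with the local function `g`. -/
theorem stmt_10 (N : ℕ) [NeZero N] (hN : 2 ≤ N) (α : ℝ) (hα : |α| < 1)
    (η : Config N) (x : Torus N) (d : Fin 4) :
    rate α η x d - rate α η (x + dvec N d) (rev d)
      = (trf (x + dvec N d) (fun ζ => -bval (ζ (0, 0))) η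
          - trf x (fun ζ => -bval (ζ (0, 0))) η)
        + (trf (fplus x d) (gfun α) η - trf (fminus x d) (gfun α) η) := by
  fin_cases d
  · show rate α η x 0 - rate α η (x + dvec N 0) (rev 0) = _
    -- d = 0, y = x + (1,0), p = x, q = x - (0,1)
    have h2 : rate α η (x + dvec N 0) (rev 0)
        = bval (η (x + (1, 0))) * (1 - bval (η x))
          + bval (η (x + (1, 0))) * (trf (x - (0, 1)) (gfun α) η - trf x (gfun α) η) := by
      show bval (η (x + (1, 0))) * (1 - bval (η (x + (1, 0) + (-1, 0))))
          + bval (η (x + (1, 0))) *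
            (trf (x + (1, 0) - (1, 0) - (0, 1)) (gfun α) η
              - trf (x + (1, 0) - (1, 0)) (gfun α) η) = _
      rw [show x + ((1, 0) : Torus N) + (-1, 0) = x from by apply Prod.ext <;> simp <;> ring,
        show x + ((1, 0) : Torus N) - (1, 0) - (0, 1) = x - (0, 1) from by apply Prod.ext <;> simp <;> ring,
        show x + ((1, 0) : Torus N) - (1, 0) = x from by apply Prod.ext <;> simp <;> ring]
    rw [show rate α η x 0
        = bval (η x) * (1 - bval (η (x + (1, 0))))
          + bval (η x) * (trf x (gfun α) η - trf (x - (0, 1)) (gfun α) η) from rfl, h2]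
    exact main_case α η x (x + (1, 0)) x (x - (0, 1)) (fun h =>
      ⟨gzero α η x x (x + (1, 0)) (Or.inl rfl) (Or.inl rfl) h,
       gzero α η (x - (0, 1)) (x + (1, 0)) x (Or.inr (by apply Prod.ext <;> simp <;> ring)) (Or.inr (by apply Prod.ext <;> simp <;> ring)) h.symm⟩)
  · show rate α η x 1 - rate α η (x + dvec N 1) (rev 1) = _
    -- d = 1, y = x + (0,1), p = x - (1,0), q = x
    have h2 : rate α η (x + dvec N 1) (rev 1)
        = bval (η (x + (0, 1))) * (1 - bval (η x))
          + bval (η (x + (0, 1))) * (trf x (gfun α) η - trf (x - (1, 0)) (gfun α) η) := by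
      show bval (η (x + (0, 1))) * (1 - bval (η (x + (0, 1) + (0, -1))))
          + bval (η (x + (0, 1))) *
            (trf (x + (0, 1) - (0, 1)) (gfun α) η
              - trf (x + (0, 1) - (1, 0) - (0, 1)) (gfun α) η) = _
      rw [show x + ((0, 1) : Torus N) + (0, -1) = x from by apply Prod.ext <;> simp <;> ring,
        show x + ((0, 1) : Torus N) - (0, 1) = x from by apply Prod.ext <;> simp <;> ring,
        show x + ((0, 1) : Torus N) - (1, 0) - (0, 1) = x - (1, 0) from by apply Prod.ext <;> simp <;> ring]
    rw [show rate α η x 1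
        = bval (η x) * (1 - bval (η (x + (0, 1))))
          + bval (η x) * (trf (x - (1, 0)) (gfun α) η - trf x (gfun α) η) from rfl, h2]
    exact main_case α η x (x + (0, 1)) (x - (1, 0)) x (fun h =>
      ⟨gzero α η (x - (1, 0)) (x + (0, 1)) x (Or.inr (by apply Prod.ext <;> simp <;> ring)) (Or.inl (by apply Prod.ext <;> simp <;> ring)) h.symm,
       gzero α η x x (x + (0, 1)) (Or.inl rfl) (Or.inr rfl) h⟩)
  · show rate α η x 2 - rate α η (x + dvec N 2) (rev 2) = _
    -- d = 2, y = x + (-1,0) = x - (1,0), p = x - (1,0) - (0,1), q = x - (1,0)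
    have h2 : rate α η (x + dvec N 2) (rev 2)
        = bval (η (x + (-1, 0))) * (1 - bval (η x))
          + bval (η (x + (-1, 0))) *
            (trf (x - (1, 0)) (gfun α) η - trf (x - (1, 0) - (0, 1)) (gfun α) η) := by
      show bval (η (x + (-1, 0))) * (1 - bval (η (x + (-1, 0) + (1, 0))))
          + bval (η (x + (-1, 0))) *
            (trf (x + (-1, 0)) (gfun α) η - trf (x + (-1, 0) - (0, 1)) (gfun α) η) = _
      rw [show x + ((-1, 0) : Torus N) + (1, 0) = x from by apply Prod.ext <;> simp <;> ring,
        show x + ((-1, 0) : Torus N) - (0, 1) = x - (1, 0) - (0, 1) from by apply Prod.ext <;> simp <;> ring,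
        show x + ((-1, 0) : Torus N) = x - (1, 0) from by apply Prod.ext <;> simp <;> ring]
    rw [show rate α η x 2
        = bval (η x) * (1 - bval (η (x + (-1, 0))))
          + bval (η x) *
            (trf (x - (1, 0) - (0, 1)) (gfun α) η - trf (x - (1, 0)) (gfun α) η) from rfl, h2]
    exact main_case α η x (x + (-1, 0)) (x - (1, 0) - (0, 1)) (x - (1, 0)) (fun h =>
      ⟨gzero α η (x - (1, 0) - (0, 1)) x (x + (-1, 0)) (Or.inr (by apply Prod.ext <;> simp <;> ring)) (Or.inr (by apply Prod.ext <;> simp <;> ring)) h,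
       gzero α η (x - (1, 0)) (x + (-1, 0)) x (Or.inl (by apply Prod.ext <;> simp <;> ring)) (Or.inl (by apply Prod.ext <;> simp <;> ring)) h.symm⟩)
  · show rate α η x 3 - rate α η (x + dvec N 3) (rev 3) = _
    -- d = 3, y = x + (0,-1) = x - (0,1), p = x - (0,1), q = x - (1,0) - (0,1)
    have h2 : rate α η (x + dvec N 3) (rev 3)
        = bval (η (x + (0, -1))) * (1 - bval (η x))
          + bval (η (x + (0, -1))) *
            (trf (x - (1, 0) - (0, 1)) (gfun α) η - trf (x - (0, 1)) (gfun α) η) := by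
      show bval (η (x + (0, -1))) * (1 - bval (η (x + (0, -1) + (0, 1))))
          + bval (η (x + (0, -1))) *
            (trf (x + (0, -1) - (1, 0)) (gfun α) η - trf (x + (0, -1)) (gfun α) η) = _
      rw [show x + ((0, -1) : Torus N) + (0, 1) = x from by apply Prod.ext <;> simp <;> ring,
        show x + ((0, -1) : Torus N) - (1, 0) = x - (1, 0) - (0, 1) from by apply Prod.ext <;> simp <;> ring,
        show x + ((0, -1) : Torus N) = x - (0, 1) from by apply Prod.ext <;> simp <;> ring]
    rw [show rate α η x 3
        = bval (η x) * (1 - bval (η (x + (0, -1))))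
          + bval (η x) *
            (trf (x - (0, 1)) (gfun α) η - trf (x - (1, 0) - (0, 1)) (gfun α) η) from rfl, h2]
    exact main_case α η x (x + (0, -1)) (x - (0, 1)) (x - (1, 0) - (0, 1)) (fun h =>
      ⟨gzero α η (x - (0, 1)) (x + (0, -1)) x (Or.inl (by apply Prod.ext <;> simp <;> ring)) (Or.inr (by apply Prod.ext <;> simp <;> ring)) h.symm,
       gzero α η (x - (1, 0) - (0, 1)) x (x + (0, -1)) (Or.inr (by apply Prod.ext <;> simp <;> ring)) (Or.inl (by apply Prod.ext <;> simp <;> ring)) h⟩)
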